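/- For all c₁, c₂, c₃ ∈ ℂ: if L is a complex Lie algebra admitting a basis e₁,…,e₅ whose only nonzero brackets among basis vectors (up to antisymmetry) are [e₁,e₄]=e₁, [e₂,e₄]=e₂, [e₃,e₅]=e₃, [e₄,e₅]=c₁·e₁+c₂·e₂+c₃·e₃, and L′ is a complex Lie algebra admitting a basis f₁,…,f₅ whose only nonzero brackets are [f₁,f₄]=f₁, [f₂,f₄]=f₂, [f₃,f₅]=f₃, then L and L′ are isomorphic as Lie algebras over ℂ. -/

import Mathlib

/-- `Realizes L c` means that the complex Lie algebra `L` admits a basis `e₁, …, e₅`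
(indexed by `Fin 5`) in which the brackets of basis vectors are given by the
structure constants `c`, i.e. `⁅eᵢ, eⱼ⁆ = ∑ₖ c i j k • eₖ` for all `i < j`,
all brackets of basis vectors being determined by these via antisymmetry. -/
def Realizes (L : Type) [LieRing L] [LieAlgebra ℂ L]
    (c : Fin 5 → Fin 5 → Fin 5 → ℂ) : Prop :=
  ∃ e : Module.Basis (Fin 5) ℂ L, ∀ i j : Fin 5, i < j →
    ⁅e i, e j⁆ = ∑ k, c i j k • e k

/-- The algebra `d₈` with an added cocycle term
`ψ = c₁ψ⁴⁵₁ + c₂ψ⁴⁵₂ + c₃ψ⁴⁵₃`: `[e₁,e₄]=e₁`, `[e₂,e₄]=e₂`, `[e₃,e₅]=e₃`,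
`[e₄,e₅]=c₁·e₁+c₂·e₂+c₃·e₃`. -/
def d8psi (c₁ c₂ c₃ : ℂ) : Fin 5 → Fin 5 → Fin 5 → ℂ := fun i j =>
  if i = 0 ∧ j = 3 then ![1, 0, 0, 0, 0]
  else if i = 1 ∧ j = 3 then ![0, 1, 0, 0, 0]
  else if i = 2 ∧ j = 4 then ![0, 0, 1, 0, 0]
  else if i = 3 ∧ j = 4 then ![c₁, c₂, c₃, 0, 0]
  else 0

lemma my_sum_lie {L : Type} [LieRing L] {ι : Type} [DecidableEq ι] (s : Finset ι)
    (f : ι → L) (y : L) : ⁅∑ i ∈ s, f i, y⁆ = ∑ i ∈ s, ⁅f i, y⁆ := by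
  induction s using Finset.induction with
  | empty => simp
  | insert _ _ h ih => simp [Finset.sum_insert h, add_lie, ih]

lemma my_lie_sum {L : Type} [LieRing L] {ι : Type} [DecidableEq ι] (s : Finset ι)
    (f : ι → L) (y : L) : ⁅y, ∑ i ∈ s, f i⁆ = ∑ i ∈ s, ⁅y, f i⁆ := by
  induction s using Finset.induction with
  | empty => simp
  | insert _ _ h ih => simp [Finset.sum_insert h, lie_add, ih]

/-- Two complex Lie algebras realized by the same structure constants are isomorphic. -/
theorem iso_of_realizes {c : Fin 5 → Fin 5 → Fin 5 → ℂ}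
    {L L' : Type} [LieRing L] [LieAlgebra ℂ L] [LieRing L'] [LieAlgebra ℂ L']
    (hL : Realizes L c) (hL' : Realizes L' c) : Nonempty (L ≃ₗ⁅ℂ⁆ L') := by
  obtain ⟨e, he⟩ := hL
  obtain ⟨f, hf⟩ := hL'
  let g : L ≃ₗ[ℂ] L' := e.equiv f (Equiv.refl _)
  have hg : ∀ i, g (e i) = f i := fun i => e.equiv_apply i f (Equiv.refl _)
  have hbrac : ∀ i j, g ⁅e i, e j⁆ = ⁅g (e i), g (e j)⁆ := by
    intro i j
    rcases lt_trichotomy i j with h | h | h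
    · rw [he i j h, hg, hg, hf i j h, map_sum]
      simp [hg]
    · subst h; simp
    · rw [show ⁅e i, e j⁆ = -⁅e j, e i⁆ from (lie_skew _ _).symm,
        show ⁅g (e i), g (e j)⁆ = -⁅g (e j), g (e i)⁆ from (lie_skew _ _).symm,
        he j i h, hg, hg, hf j i h, map_neg, map_sum]
      simp [hg]
  have key : ∀ x y : L, g ⁅x, y⁆ = ⁅g x, g y⁆ := by
    intro x y
    rw [← e.sum_repr x, ← e.sum_repr y]
    simp only [my_sum_lie, my_lie_sum, smul_lie, lie_smul, map_sum, map_smul, hbrac]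
  exact ⟨{ toLinearMap := g.toLinearMap, map_lie' := fun {x y} => key x y,
           invFun := g.symm, left_inv := g.left_inv, right_inv := g.right_inv }⟩

set_option linter.unnecessarySeqFocus false in
/-- A change of basis killing the cocycle term: `d8psi c₁ c₂ c₃` realizes
`d8psi 0 0 0` as well. -/
theorem realizes_zero (c₁ c₂ c₃ : ℂ) (L : Type) [LieRing L] [LieAlgebra ℂ L]
    (hL : Realizes L (d8psi c₁ c₂ c₃)) : Realizes L (d8psi 0 0 0) := by
  obtain ⟨e, he⟩ := hL
  -- concrete bracket values
  have h03 : ⁅e 0, e 3⁆ = e 0 := by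
    have := he 0 3 (by decide); simpa [d8psi, Fin.sum_univ_five] using this
  have h13 : ⁅e 1, e 3⁆ = e 1 := by
    have := he 1 3 (by decide); simpa [d8psi, Fin.sum_univ_five] using this
  have h24 : ⁅e 2, e 4⁆ = e 2 := by
    have := he 2 4 (by decide); simpa [d8psi, Fin.sum_univ_five] using this
  have h34 : ⁅e 3, e 4⁆ = c₁ • e 0 + c₂ • e 1 + c₃ • e 2 := by
    have := he 3 4 (by decide)
    simpa [d8psi, Fin.sum_univ_five, add_assoc] using this
  have h01 : ⁅e 0, e 1⁆ = 0 := by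
    have := he 0 1 (by decide); simpa [d8psi, Fin.sum_univ_five] using this
  have h02 : ⁅e 0, e 2⁆ = 0 := by
    have := he 0 2 (by decide); simpa [d8psi, Fin.sum_univ_five] using this
  have h04 : ⁅e 0, e 4⁆ = 0 := by
    have := he 0 4 (by decide); simpa [d8psi, Fin.sum_univ_five] using this
  have h12 : ⁅e 1, e 2⁆ = 0 := by
    have := he 1 2 (by decide); simpa [d8psi, Fin.sum_univ_five] using this
  have h14 : ⁅e 1, e 4⁆ = 0 := by
    have := he 1 4 (by decide); simpa [d8psi, Fin.sum_univ_five] using this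
  have h23 : ⁅e 2, e 3⁆ = 0 := by
    have := he 2 3 (by decide); simpa [d8psi, Fin.sum_univ_five] using this
  -- new basis
  set v : Fin 5 → L := ![e 0, e 1, e 2, e 3 - c₃ • e 2, e 4 + c₁ • e 0 + c₂ • e 1] with hv
  set w : Fin 5 → L := ![e 0, e 1, e 2, e 3 + c₃ • e 2, e 4 - c₁ • e 0 - c₂ • e 1] with hw
  let φ : L →ₗ[ℂ] L := e.constr ℂ v
  let ψ : L →ₗ[ℂ] L := e.constr ℂ w
  have hφ : ∀ i, φ (e i) = v i := fun i => e.constr_basis ℂ v i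
  have hψ : ∀ i, ψ (e i) = w i := fun i => e.constr_basis ℂ w i
  have hψφ : ψ.comp φ = LinearMap.id := by
    apply e.ext
    intro i
    fin_cases i <;>
      simp [hφ, hψ, hv, hw, map_add, map_sub, map_smul] <;> abel
  have hφψ : φ.comp ψ = LinearMap.id := by
    apply e.ext
    intro i
    fin_cases i <;>
      simp [hφ, hψ, hv, hw, map_add, map_sub, map_smul] <;> abel
  let Φ : L ≃ₗ[ℂ] L := LinearEquiv.ofLinear φ ψ hφψ hψφ
  let b : Module.Basis (Fin 5) ℂ L := e.map Φ
  have hb : ∀ i, b i = v i := fun i => hφ i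
  have h30 : ⁅e 3, e 0⁆ = -e 0 := by rw [← lie_skew, h03]
  have h31 : ⁅e 3, e 1⁆ = -e 1 := by rw [← lie_skew, h13]
  have h42 : ⁅e 4, e 2⁆ = -e 2 := by rw [← lie_skew, h24]
  have h43 : ⁅e 4, e 3⁆ = -(c₁ • e 0 + c₂ • e 1 + c₃ • e 2) := by rw [← lie_skew, h34]
  have h10 : ⁅e 1, e 0⁆ = 0 := by rw [← lie_skew, h01, neg_zero]
  have h20 : ⁅e 2, e 0⁆ = 0 := by rw [← lie_skew, h02, neg_zero]
  have h40 : ⁅e 4, e 0⁆ = 0 := by rw [← lie_skew, h04, neg_zero]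
  have h21 : ⁅e 2, e 1⁆ = 0 := by rw [← lie_skew, h12, neg_zero]
  have h41 : ⁅e 4, e 1⁆ = 0 := by rw [← lie_skew, h14, neg_zero]
  have h32 : ⁅e 3, e 2⁆ = 0 := by rw [← lie_skew, h23, neg_zero]
  refine ⟨b, ?_⟩
  intro i j hij
  fin_cases i <;> fin_cases j <;>
    first
    | exact absurd hij (by decide)
    | (simp only [hb, hv, d8psi, Fin.sum_univ_five, Matrix.cons_val_zero,
        Matrix.cons_val_one, Matrix.head_cons, Matrix.cons_val_two, Matrix.tail_cons,
        Matrix.cons_val_three, Matrix.cons_val_four, Matrix.cons_val_fin_one]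
       simp (config := {decide := true}) only [if_true, if_false, and_self, and_true,
         true_and, and_false, false_and]
       simp [lie_add, add_lie, lie_smul, smul_lie, lie_sub, sub_lie,
         h01, h02, h03, h04, h12, h13, h14, h23, h24, h34,
         h10, h20, h21, h30, h31, h32, h40, h41, h42, h43, smul_add, smul_sub]
       try abel)

/-- Adding any cocycle term `ψ = c₁ψ⁴⁵₁ + c₂ψ⁴⁵₂ + c₃ψ⁴⁵₃` to the
algebra `d₈` yields an isomorphic algebra. -/
theorem d8_psi_iso_d8 (c₁ c₂ c₃ : ℂ)
    (L L' : Type) [LieRing L] [LieAlgebra ℂ L] [LieRing L'] [LieAlgebra ℂ L']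
    (hL : Realizes L (d8psi c₁ c₂ c₃)) (hL' : Realizes L' (d8psi 0 0 0)) :
    Nonempty (L ≃ₗ⁅ℂ⁆ L') := by
  exact iso_of_realizes (realizes_zero c₁ c₂ c₃ L hL) hL'
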